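/- Let G, K ∈ ℝ^{n×n} be invertible with I + GK invertible, S = (I + GK)⁻¹, Λ ∈ ℝ^{n×n}, and suppose condition (C') holds: xᵀ(I − Λ)(KS)⁻¹Gᵀx > xᵀGGᵀx for all nonzero x. Set Π = G and Π̂ = ΛΠ + (I − Λ)(−K⁻¹). Let w ∈ ℝⁿ, ε > 0, φ : ℝⁿ → ℝ differentiable, and let u : ℝ → ℝⁿ be a differentiable solution of u̇(t) = −ε Π̂ᵀ∇φ(Πu(t) + w). Then Π Π̂ᵀ + Π̂ Πᵀ is negative definite, and on any interval on which ∇φ(Πu(t) + w) ≠ 0 the cost t ↦ φ(Πu(t) + w) is strictly increasing; in particular the OAG dynamics do not converge to the minimizer from any non-stationary initial condition. -/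

import Mathlib

open Matrix Filter

private lemma quad_transpose {n : ℕ} (M : Matrix (Fin n) (Fin n) ℝ) (x : Fin n → ℝ) :
    x ⬝ᵥ M.transpose *ᵥ x = x ⬝ᵥ M *ᵥ x := by
  rw [Matrix.dotProduct_mulVec, Matrix.vecMul_transpose, dotProduct_comm]

/-- **OAG divergence.** Under condition (C′), with `Π = G` and
`Π̂ = ΛΠ + (I − Λ)(−K⁻¹)`, the matrix `Π Π̂ᵀ + Π̂ Πᵀ` is negative definite; along any
solution of the OAG dynamics the cost `t ↦ φ(Πu(t) + w)` is strictly increasing on any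
interval where `∇φ(Πu(t) + w) ≠ 0`; in particular the dynamics do not converge to a
minimizer from any non-stationary initial condition. -/
theorem stmt15 {n : ℕ} (G K : Matrix (Fin n) (Fin n) ℝ)
    (hG : IsUnit G.det) (hK : IsUnit K.det) (hGK : IsUnit (1 + G * K).det)
    (S : Matrix (Fin n) (Fin n) ℝ) (hS : S = (1 + G * K)⁻¹)
    (Λ : Matrix (Fin n) (Fin n) ℝ)
    (hC' : ∀ x : Fin n → ℝ, x ≠ 0 →
      x ⬝ᵥ (G * G.transpose).mulVec x
        < x ⬝ᵥ ((1 - Λ) * (K * S)⁻¹ * G.transpose).mulVec x)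
    (P Phat : Matrix (Fin n) (Fin n) ℝ)
    (hP : P = G) (hPhat : Phat = Λ * P + (1 - Λ) * (-K⁻¹))
    (w : EuclideanSpace ℝ (Fin n)) (ε : ℝ) (hε : 0 < ε)
    (φ : EuclideanSpace ℝ (Fin n) → ℝ)
    (hdiff : Differentiable ℝ φ)
    (u : ℝ → EuclideanSpace ℝ (Fin n))
    (hu : ∀ t : ℝ, HasDerivAt u
        (-(ε • Matrix.toEuclideanLin Phat.transpose
            (gradient φ (Matrix.toEuclideanLin P (u t) + w)))) t) :
    (-(P * Phat.transpose + Phat * P.transpose)).PosDef ∧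
    (∀ s : Set ℝ, s.OrdConnected →
      (∀ t ∈ s, gradient φ (Matrix.toEuclideanLin P (u t) + w) ≠ 0) →
      StrictMonoOn (fun t => φ (Matrix.toEuclideanLin P (u t) + w)) s) ∧
    (∀ ustar : EuclideanSpace ℝ (Fin n),
      (∀ v, φ (Matrix.toEuclideanLin P ustar + w) ≤ φ (Matrix.toEuclideanLin P v + w)) →
      gradient φ (Matrix.toEuclideanLin P (u 0) + w) ≠ 0 →
      ¬ Tendsto u atTop (nhds ustar)) := by
  subst hP hPhat hS
  set Ph := Λ * P + (1 - Λ) * (-K⁻¹) with hPh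
  -- the matrix identity behind condition (C')
  have hmat : (1 - Λ) * (K * (1 + P * K)⁻¹)⁻¹ * P.transpose
      = P * P.transpose - Ph * P.transpose := by
    rw [Matrix.mul_inv_rev, Matrix.nonsing_inv_nonsing_inv _ hGK]
    have hKK : K * K⁻¹ = 1 := Matrix.mul_nonsing_inv K hK
    have h1 : (1 + P * K) * K⁻¹ = K⁻¹ + P := by
      rw [add_mul, one_mul, mul_assoc, hKK, mul_one]
    rw [h1, hPh]
    noncomm_ring
  -- the key quadratic-form inequality
  have key : ∀ x : Fin n → ℝ, x ≠ 0 → x ⬝ᵥ (Ph * P.transpose) *ᵥ x < 0 := by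
    intro x hx
    have h := hC' x hx
    rw [hmat, Matrix.sub_mulVec, dotProduct_sub] at h
    linarith
  have key' : ∀ x : Fin n → ℝ, x ≠ 0 → x ⬝ᵥ (P * Ph.transpose) *ᵥ x < 0 := by
    intro x hx
    have := quad_transpose (Ph * P.transpose) x
    rw [Matrix.transpose_mul, Matrix.transpose_transpose] at this
    rw [this]
    exact key x hx
  -- Part 1: positive definiteness
  have part1 : (-(P * Ph.transpose + Ph * P.transpose)).PosDef := by
    rw [Matrix.posDef_iff_dotProduct_mulVec]
    constructor
    · have ht : (-(P * Ph.transpose + Ph * P.transpose)).transpose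
          = -(P * Ph.transpose + Ph * P.transpose) := by
        rw [Matrix.transpose_neg, Matrix.transpose_add, Matrix.transpose_mul,
          Matrix.transpose_mul, Matrix.transpose_transpose, Matrix.transpose_transpose,
          add_comm]
      show (-(P * Ph.transpose + Ph * P.transpose)).conjTranspose = _
      rw [Matrix.conjTranspose_eq_transpose_of_trivial, ht]
    · intro x hx
      rw [star_trivial, Matrix.neg_mulVec, dotProduct_neg, Matrix.add_mulVec,
        dotProduct_add]
      have h1 := key x hx
      have h2 := key' x hx
      linarith
  -- the derivative of the cost along the trajectory
  set g : ℝ → EuclideanSpace ℝ (Fin n) :=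
    fun t => gradient φ (Matrix.toEuclideanLin P (u t) + w) with hgdef
  set a : ℝ → (Fin n → ℝ) := fun t => WithLp.equiv 2 _ (g t) with hadef
  set D : ℝ → ℝ := fun t => -(ε * (a t ⬝ᵥ (P * Ph.transpose) *ᵥ a t)) with hDdef
  have hder : ∀ t : ℝ, HasDerivAt
      (fun t => φ (Matrix.toEuclideanLin P (u t) + w)) (D t) t := by
    intro t
    set L := LinearMap.toContinuousLinearMap (Matrix.toEuclideanLin P) with hL
    have hLap : ∀ v, L v = Matrix.toEuclideanLin P v := fun v => rfl
    have hc : HasDerivAt (fun s => Matrix.toEuclideanLin P (u s) + w)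
        (L (-(ε • Matrix.toEuclideanLin Ph.transpose (g t)))) t :=
      (L.hasFDerivAt.comp_hasDerivAt t (hu t)).add_const w
    have hgr : HasGradientAt φ (g t) (Matrix.toEuclideanLin P (u t) + w) :=
      (hdiff _).hasGradientAt
    have hcomp := hgr.hasFDerivAt.comp_hasDerivAt t hc
    refine hcomp.congr_deriv ?_
    rw [InnerProductSpace.toDual_apply_apply, hLap, map_neg, LinearMap.map_smul,
      inner_neg_right, real_inner_smul_right]
    rw [EuclideanSpace.inner_eq_star_dotProduct, star_trivial,
      Matrix.ofLp_toEuclideanLin_apply, Matrix.ofLp_toEuclideanLin_apply,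
      Matrix.mulVec_mulVec, dotProduct_comm]
    rfl
  have haz : ∀ t, g t ≠ 0 → a t ≠ 0 := by
    intro t hgt h0
    apply hgt
    have := congrArg (WithLp.equiv 2 (Fin n → ℝ)).symm h0
    simpa [hadef] using this
  have hDpos : ∀ t, g t ≠ 0 → 0 < D t := by
    intro t hgt
    have := key' (a t) (haz t hgt)
    simp only [hDdef]
    nlinarith
  have hDnonneg : ∀ t, 0 ≤ D t := by
    intro t
    by_cases hgt : g t = 0
    · simp only [hDdef, hadef, hgt]
      simp
    · exact le_of_lt (hDpos t hgt)
  refine ⟨part1, ?_, ?_⟩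
  · -- Part 2: strict monotonicity
    intro s hso hgs
    refine strictMonoOn_of_deriv_pos (hso.convex) ?_ ?_
    · exact (Differentiable.continuous (fun t => (hder t).differentiableAt)).continuousOn
    · intro x hx
      rw [(hder x).deriv]
      exact hDpos x (hgs x (interior_subset hx))
  · -- Part 3: non-convergence
    intro ustar hmin hg0 htend
    set F : EuclideanSpace ℝ (Fin n) → ℝ :=
      fun v => φ (Matrix.toEuclideanLin P v + w) with hF
    have hFcont : Continuous F := by
      apply hdiff.continuous.comp
      exact ((LinearMap.toContinuousLinearMap
        (Matrix.toEuclideanLin P)).continuous.add continuous_const)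
    have htf : Tendsto (fun t => φ (Matrix.toEuclideanLin P (u t) + w)) atTop
        (nhds (F ustar)) := (hFcont.continuousAt.tendsto).comp htend
    have hmono : Monotone (fun t => φ (Matrix.toEuclideanLin P (u t) + w)) := by
      apply monotone_of_deriv_nonneg (fun t => (hder t).differentiableAt)
      intro t
      rw [(hder t).deriv]
      exact hDnonneg t
    have hconst : (fun t => φ (Matrix.toEuclideanLin P (u t) + w))
        = fun _ => F ustar := by
      funext t
      exact le_antisymm (hmono.ge_of_tendsto htf t) (hmin (u t))
    have h0 := hder 0
    rw [hconst] at h0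
    have hD0 : D 0 = 0 := h0.unique (hasDerivAt_const 0 (F ustar))
    have := hDpos 0 hg0
    linarith
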